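/- For every k ∈ (0, 1/2), the Bernoulli reparameterization f_k is differentiable at every point of ℝ, and its derivative satisfies 0 < f_k'(θ) ≤ 1 for all θ ∈ ℝ (so the outer logistic branches of f_k never have slope exceeding that of the middle identity branch). -/

import Mathlib

open Real Set Filter

private lemma logistic_hasDerivAt (a C b θ : ℝ) (ha : a ≠ 0) (hC : 0 < C) :
    HasDerivAt (fun θ : ℝ => (1 + C * Real.exp (-θ / a + b))⁻¹)
      (C * Real.exp (-θ / a + b) / (a * (1 + C * Real.exp (-θ / a + b)) ^ 2)) θ := by
  have hu : HasDerivAt (fun θ : ℝ => -θ / a + b) (-1 / a) θ := by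
    simpa using (((hasDerivAt_id θ).neg.div_const a).add_const b)
  have h2 := ((hu.exp.const_mul C).const_add 1)
  have hpos : (0:ℝ) < 1 + C * Real.exp (-θ / a + b) := by positivity
  have := h2.inv (ne_of_gt hpos)
  refine this.congr_deriv ?_
  field_simp

private lemma bound1 (k t : ℝ) (hk0 : 0 < k) (hk1 : k < 1/2) (ht : (1 - k)/k ≤ t) :
    0 < t / (k * (1 - k) * (1 + t) ^ 2) ∧ t / (k * (1 - k) * (1 + t) ^ 2) ≤ 1 := by
  have h1k : 0 < 1 - k := by linarith
  have ht0 : 0 < t := lt_of_lt_of_le (div_pos h1k hk0) ht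
  have hden : 0 < k * (1 - k) * (1 + t) ^ 2 := by positivity
  have h1 : 1 - k ≤ k * t := by
    rw [div_le_iff₀ hk0] at ht; linarith [ht]
  have h2 : k ≤ (1 - k) * t := by nlinarith [h1, mul_pos hk0 h1k]
  refine ⟨div_pos ht0 hden, ?_⟩
  rw [div_le_one hden]
  nlinarith [mul_nonneg (sub_nonneg.2 h1) (sub_nonneg.2 h2)]

private lemma bound3 (k t : ℝ) (hk0 : 0 < k) (hk1 : k < 1/2) (ht0 : 0 < t)
    (ht : t ≤ k / (1 - k)) :
    0 < t / (k * (1 - k) * (1 + t) ^ 2) ∧ t / (k * (1 - k) * (1 + t) ^ 2) ≤ 1 := by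
  have h1k : 0 < 1 - k := by linarith
  have hden : 0 < k * (1 - k) * (1 + t) ^ 2 := by positivity
  have h1 : (1 - k) * t ≤ k := by
    rw [le_div_iff₀ h1k] at ht; linarith [ht]
  have h2 : k * t ≤ 1 - k := by nlinarith [h1, mul_pos hk0 h1k]
  refine ⟨div_pos ht0 hden, ?_⟩
  rw [div_le_one hden]
  nlinarith [mul_nonneg (sub_nonneg.2 h1) (sub_nonneg.2 h2)]

theorem bernoulli_reparam_deriv_bounds
    (k : ℝ) (hk0 : 0 < k) (hk1 : k < 1/2) :
    Differentiable ℝ (fun θ : ℝ =>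
      if θ ≤ k then
        (1 + ((1 - k) / k) * Real.exp (-θ / (k * (1 - k)) + 1 / (1 - k)))⁻¹
      else if θ ≤ 1 - k then θ
      else
        (1 + (k / (1 - k)) * Real.exp (-θ / (k * (1 - k)) + 1 / k))⁻¹) ∧
    ∀ θ : ℝ,
      0 < deriv (fun θ : ℝ =>
        if θ ≤ k then
          (1 + ((1 - k) / k) * Real.exp (-θ / (k * (1 - k)) + 1 / (1 - k)))⁻¹
        else if θ ≤ 1 - k then θ
        else
          (1 + (k / (1 - k)) * Real.exp (-θ / (k * (1 - k)) + 1 / k))⁻¹) θ ∧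
      deriv (fun θ : ℝ =>
        if θ ≤ k then
          (1 + ((1 - k) / k) * Real.exp (-θ / (k * (1 - k)) + 1 / (1 - k)))⁻¹
        else if θ ≤ 1 - k then θ
        else
          (1 + (k / (1 - k)) * Real.exp (-θ / (k * (1 - k)) + 1 / k))⁻¹) θ ≤ 1 := by
  have h1k : 0 < 1 - k := by linarith
  have hkk : k < 1 - k := by linarith
  have ha : 0 < k * (1 - k) := mul_pos hk0 h1k
  have ha' : k * (1 - k) ≠ 0 := ne_of_gt ha
  set g1 : ℝ → ℝ := fun θ =>
    (1 + ((1 - k) / k) * Real.exp (-θ / (k * (1 - k)) + 1 / (1 - k)))⁻¹ with hg1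
  set g3 : ℝ → ℝ := fun θ =>
    (1 + (k / (1 - k)) * Real.exp (-θ / (k * (1 - k)) + 1 / k))⁻¹ with hg3
  set F : ℝ → ℝ := fun θ : ℝ =>
    if θ ≤ k then
      (1 + ((1 - k) / k) * Real.exp (-θ / (k * (1 - k)) + 1 / (1 - k)))⁻¹
    else if θ ≤ 1 - k then θ
    else
      (1 + (k / (1 - k)) * Real.exp (-θ / (k * (1 - k)) + 1 / k))⁻¹ with hF
  set d1 : ℝ → ℝ := fun θ =>
    ((1 - k) / k) * Real.exp (-θ / (k * (1 - k)) + 1 / (1 - k)) /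
      ((k * (1 - k)) * (1 + ((1 - k) / k) * Real.exp (-θ / (k * (1 - k)) + 1 / (1 - k))) ^ 2)
    with hd1
  set d3 : ℝ → ℝ := fun θ =>
    (k / (1 - k)) * Real.exp (-θ / (k * (1 - k)) + 1 / k) /
      ((k * (1 - k)) * (1 + (k / (1 - k)) * Real.exp (-θ / (k * (1 - k)) + 1 / k)) ^ 2)
    with hd3
  set D : ℝ → ℝ := fun θ => if θ ≤ k then d1 θ else if θ ≤ 1 - k then 1 else d3 θ with hD
  have hFg1 : ∀ x, x ≤ k → F x = g1 x := by
    intro x hx; simp [hF, hg1, hx]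
  have hFid : ∀ x, k < x → x ≤ 1 - k → F x = x := by
    intro x h1 h2; simp [hF, not_le.mpr h1, h2]
  have hFg3 : ∀ x, 1 - k < x → F x = g3 x := by
    intro x hx; simp [hF, hg3, not_le.mpr hx, not_le.mpr (lt_trans hkk hx)]
  have hg1k : g1 k = k := by
    rw [hg1]
    simp only
    rw [show -k / (k * (1 - k)) + 1 / (1 - k) = 0 by field_simp; try ring, Real.exp_zero]
    field_simp
    try ring
  have hg3k : g3 (1 - k) = 1 - k := by
    rw [hg3]
    simp only
    rw [show -(1 - k) / (k * (1 - k)) + 1 / k = 0 by field_simp; try ring, Real.exp_zero]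
    field_simp
    try ring
  have hd1k : d1 k = 1 := by
    rw [hd1]
    simp only
    rw [show -k / (k * (1 - k)) + 1 / (1 - k) = 0 by field_simp; try ring, Real.exp_zero]
    field_simp
    try ring
  have hd3k : d3 (1 - k) = 1 := by
    rw [hd3]
    simp only
    rw [show -(1 - k) / (k * (1 - k)) + 1 / k = 0 by field_simp; try ring, Real.exp_zero]
    field_simp
    try ring
  have hC1 : (0:ℝ) < (1 - k) / k := div_pos h1k hk0
  have hC3 : (0:ℝ) < k / (1 - k) := div_pos hk0 h1k
  have hder1 : ∀ θ, HasDerivAt g1 (d1 θ) θ := fun θ =>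
    logistic_hasDerivAt (k * (1 - k)) ((1 - k) / k) (1 / (1 - k)) θ ha' hC1
  have hder3 : ∀ θ, HasDerivAt g3 (d3 θ) θ := fun θ =>
    logistic_hasDerivAt (k * (1 - k)) (k / (1 - k)) (1 / k) θ ha' hC3
  have key : ∀ θ : ℝ, HasDerivAt F (D θ) θ := by
    intro θ
    rcases lt_trichotomy θ k with h | h | h
    · have hev : F =ᶠ[nhds θ] g1 := by
        filter_upwards [Iio_mem_nhds h] with x hx
        exact hFg1 x (le_of_lt (mem_Iio.mp hx))
      have hDe : D θ = d1 θ := by simp [hD, le_of_lt h]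
      rw [hDe]
      exact (hder1 θ).congr_of_eventuallyEq hev
    · rw [h]
      have hDk : D k = 1 := by simp [hD, hd1k]
      rw [hDk]
      have hl : HasDerivWithinAt F 1 (Iic k) k := by
        have h2 := ((hder1 k).hasDerivWithinAt (s := Iic k)).congr
          (fun x hx => hFg1 x (mem_Iic.mp hx)) (hFg1 k le_rfl)
        rwa [hd1k] at h2
      have hr : HasDerivWithinAt F 1 (Ici k) k := by
        have hicc : HasDerivWithinAt F 1 (Icc k (1 - k)) k := by
          refine ((hasDerivAt_id k).hasDerivWithinAt (s := Icc k (1 - k))).congr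
            (fun x hx => ?_) ?_
          · rcases eq_or_lt_of_le hx.1 with hxk | hxk
            · rw [← hxk, hFg1 k le_rfl, hg1k]; rfl
            · rw [hFid x hxk hx.2]; rfl
          · rw [hFg1 k le_rfl, hg1k]; rfl
        refine hicc.mono_of_mem_nhdsWithin ?_
        rw [show Icc k (1 - k) = Ici k ∩ Iic (1 - k) from (Ici_inter_Iic).symm]
        exact inter_mem_nhdsWithin _ (Iic_mem_nhds hkk)
      have h3 := hl.union hr
      rw [Iic_union_Ici] at h3
      exact hasDerivWithinAt_univ.mp h3
    · rcases lt_trichotomy θ (1 - k) with h2 | h2 | h2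
      · have hev : F =ᶠ[nhds θ] id := by
          filter_upwards [Ioo_mem_nhds h h2] with x hx
          rw [hFid x hx.1 (le_of_lt hx.2)]; rfl
        have hDe : D θ = 1 := by simp [hD, not_le.mpr h, le_of_lt h2]
        rw [hDe]
        exact (hasDerivAt_id θ).congr_of_eventuallyEq hev
      · rw [h2]
        have hDk : D (1 - k) = 1 := by simp [hD, not_le.mpr hkk]
        rw [hDk]
        have hl : HasDerivWithinAt F 1 (Iic (1 - k)) (1 - k) := by
          have hioc : HasDerivWithinAt F 1 (Ioc k (1 - k)) (1 - k) := by
            refine ((hasDerivAt_id (1 - k)).hasDerivWithinAt (s := Ioc k (1 - k))).congr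
              (fun x hx => ?_) ?_
            · rw [hFid x hx.1 hx.2]; rfl
            · rw [hFid (1 - k) hkk le_rfl]; rfl
          refine hioc.mono_of_mem_nhdsWithin ?_
          rw [show Ioc k (1 - k) = Iic (1 - k) ∩ Ioi k from (Iic_inter_Ioi).symm]
          exact inter_mem_nhdsWithin _ (Ioi_mem_nhds hkk)
        have hr : HasDerivWithinAt F 1 (Ici (1 - k)) (1 - k) := by
          have h3 : HasDerivWithinAt F (d3 (1 - k)) (Ici (1 - k)) (1 - k) := by
            refine ((hder3 (1 - k)).hasDerivWithinAt (s := Ici (1 - k))).congr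
              (fun x hx => ?_) ?_
            · rcases eq_or_lt_of_le (mem_Ici.mp hx) with hx1 | hx1
              · rw [← hx1, hFid (1 - k) hkk le_rfl, hg3k]
              · exact hFg3 x hx1
            · rw [hFid (1 - k) hkk le_rfl, hg3k]
          rwa [hd3k] at h3
        have h3 := hl.union hr
        rw [Iic_union_Ici] at h3
        exact hasDerivWithinAt_univ.mp h3
      · have hev : F =ᶠ[nhds θ] g3 := by
          filter_upwards [Ioi_mem_nhds h2] with x hx
          exact hFg3 x (mem_Ioi.mp hx)
        have hDe : D θ = d3 θ := by simp [hD, not_le.mpr h, not_le.mpr h2]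
        rw [hDe]
        exact (hder3 θ).congr_of_eventuallyEq hev
  refine ⟨fun θ => (key θ).differentiableAt, fun θ => ?_⟩
  rw [(key θ).deriv]
  rcases le_or_gt θ k with h | h
  · have hDe : D θ = d1 θ := by simp [hD, h]
    rw [hDe, hd1]
    simp only
    have hexp : 1 ≤ Real.exp (-θ / (k * (1 - k)) + 1 / (1 - k)) := by
      apply Real.one_le_exp
      have heq : -θ / (k * (1 - k)) + 1 / (1 - k) = (k - θ) / (k * (1 - k)) := by
        field_simp
        ring
      rw [heq]
      exact div_nonneg (by linarith) ha.le
    have ht : (1 - k) / k ≤ ((1 - k) / k) * Real.exp (-θ / (k * (1 - k)) + 1 / (1 - k)) :=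
      le_mul_of_one_le_right hC1.le hexp
    exact bound1 k _ hk0 hk1 ht
  · rcases le_or_gt θ (1 - k) with h2 | h2
    · have hDe : D θ = 1 := by simp [hD, not_le.mpr h, h2]
      rw [hDe]
      exact ⟨one_pos, le_rfl⟩
    · have hDe : D θ = d3 θ := by simp [hD, not_le.mpr h, not_le.mpr h2]
      rw [hDe, hd3]
      simp only
      have hexp : Real.exp (-θ / (k * (1 - k)) + 1 / k) ≤ 1 := by
        rw [Real.exp_le_one_iff]
        have heq : -θ / (k * (1 - k)) + 1 / k = ((1 - k) - θ) / (k * (1 - k)) := by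
          field_simp
          ring
        rw [heq]
        exact div_nonpos_of_nonpos_of_nonneg (by linarith) ha.le
      have ht : (k / (1 - k)) * Real.exp (-θ / (k * (1 - k)) + 1 / k) ≤ k / (1 - k) :=
        mul_le_of_le_one_right hC3.le hexp
      exact bound3 k _ hk0 hk1 (mul_pos hC3 (Real.exp_pos _)) ht
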